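/- The ω-language L = (aa)*b^ω over Σ = {a,b} (ω-words consisting of an even number of a's followed by infinitely many b's) is respective of its right congruence but is not non-counting. -/

import Mathlib

namespace OmegaRC

variable {σ : Type*} {Q : Type*}

/-- Concatenation of a finite word with an ω-word. -/
def wcat (x : List σ) (w : ℕ → σ) : ℕ → σ :=
  fun n => if h : n < x.length then x.get ⟨n, h⟩ else w (n - x.length)

/-- Canonical right congruence of an ω-language: `x ∼_L y`. -/
def RC (L : Set (ℕ → σ)) (x y : List σ) : Prop :=
  ∀ w : ℕ → σ, wcat x w ∈ L ↔ wcat y w ∈ L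

/-- The periodic ω-word `v^ω` (for nonempty `v`). -/
def wrep [Inhabited σ] (v : List σ) : ℕ → σ :=
  fun n => v.getD (n % v.length) default

/-- Finite power `v^n` of a finite word. -/
def wpow (v : List σ) (n : ℕ) : List σ := (List.replicate n v).flatten

/-- The finite segment `w[i..j)` of an ω-word. -/
def segment (w : ℕ → σ) (i j : ℕ) : List σ :=
  (List.range (j - i)).map (fun k => w (i + k))

/-- `R^ω`: ω-words that are infinite concatenations of (nonempty) words of `R`. -/
def omegaPow (R : Set (List σ)) : Set (ℕ → σ) :=
  { w | ∃ f : ℕ → ℕ, f 0 = 0 ∧ StrictMono f ∧ ∀ i, segment w (f i) (f (i + 1)) ∈ R }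

/-- A complete deterministic transition structure. -/
structure DetAut (σ : Type*) (Q : Type*) where
  init : Q
  step : Q → σ → Q

/-- Extended transition function on finite words. -/
def DetAut.runFin (A : DetAut σ Q) (q : Q) (x : List σ) : Q := x.foldl A.step q

/-- The run of a deterministic automaton on an ω-word. -/
def DetAut.run (A : DetAut σ Q) (w : ℕ → σ) : ℕ → Q
  | 0 => A.init
  | n + 1 => A.step (A.run w n) (w n)

/-- The set of states occurring infinitely often in a run. -/
def infSet (r : ℕ → Q) : Set Q := { q | ∀ n, ∃ m, n ≤ m ∧ r m = q }

/-- Muller acceptance. -/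
def MullerAcc (A : DetAut σ Q) (acc : Set (Set Q)) (w : ℕ → σ) : Prop :=
  infSet (A.run w) ∈ acc

/-- Büchi acceptance. -/
def BuchiAcc (A : DetAut σ Q) (F : Set Q) (w : ℕ → σ) : Prop :=
  ∀ n, ∃ m, n ≤ m ∧ A.run w m ∈ F

/-- co-Büchi acceptance. -/
def CoBuchiAcc (A : DetAut σ Q) (F : Set Q) (w : ℕ → σ) : Prop :=
  ∃ n, ∀ m, n ≤ m → A.run w m ∉ F

/-- Colors occurring infinitely often in a run. -/
def infColors (κ : Q → ℕ) (r : ℕ → Q) : Set ℕ := { c | ∀ n, ∃ m, n ≤ m ∧ κ (r m) = c }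

/-- Parity (min-odd) acceptance. -/
def ParityAcc (A : DetAut σ Q) (κ : Q → ℕ) (w : ℕ → σ) : Prop :=
  ∃ c ∈ infColors κ (A.run w), (∀ c' ∈ infColors κ (A.run w), c ≤ c') ∧ Odd c

/-- `S` is strongly connected. -/
def IsSCC (A : DetAut σ Q) (S : Set Q) : Prop :=
  ∀ s1 ∈ S, ∀ s2 ∈ S, ∃ x : List σ, x ≠ [] ∧ A.runFin s1 x = s2

/-- Transitions taken infinitely often in the run on `w`. -/
def infTrans (A : DetAut σ Q) (w : ℕ → σ) : Set (Q × σ × Q) :=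
  { t | ∀ n, ∃ m, n ≤ m ∧ (A.run w m, w m, A.run w (m + 1)) = t }

/-- Transition-table (transition-based Muller) acceptance. -/
def TransAcc (A : DetAut σ Q) (acc : Set (Set (Q × σ × Q))) (w : ℕ → σ) : Prop :=
  infTrans A w ∈ acc

/-- Non-counting ω-language. -/
def NonCounting (L : Set (ℕ → σ)) : Prop :=
  ∃ n₀ : ℕ, ∀ n > n₀, ∀ u v : List σ, ∀ w : ℕ → σ,
    (wcat (u ++ wpow v n) w ∈ L ↔ wcat (u ++ wpow v (n + 1)) w ∈ L)

/-- `L` is respective of its right congruence. -/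
def Respective [Inhabited σ] (L : Set (ℕ → σ)) : Prop :=
  ∃ n₀ : ℕ, ∀ n > n₀, ∀ x u : List σ, u ≠ [] →
    wcat x (wrep u) ∈ L → RC L (x ++ wpow u n) (x ++ wpow u (n + 1))

/-! ### Auxiliary lemmas -/

def Lx : Set (ℕ → Bool) :=
  { w | ∃ k : ℕ, w = wcat (List.replicate (2 * k) true) (fun _ => false) }

lemma wcat_lt (x : List Bool) (w : ℕ → Bool) {n : ℕ} (h : n < x.length) :
    wcat x w n = x.get ⟨n, h⟩ := dif_pos h

lemma wcat_ge (x : List Bool) (w : ℕ → Bool) {n : ℕ} (h : x.length ≤ n) :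
    wcat x w n = w (n - x.length) := dif_neg (by omega)

lemma wcat_replicate_true (m n : ℕ) :
    wcat (List.replicate m true) (fun _ => false) n = decide (n < m) := by
  unfold wcat
  split
  · next h =>
    simp at h
    simp [List.getElem_replicate, h]
  · next h =>
    simp at h
    simp [Nat.not_lt.mpr h]

lemma mem_Lx_iff (w : ℕ → Bool) :
    w ∈ Lx ↔ ∃ k : ℕ, ∀ n, w n = decide (n < 2 * k) := by
  constructor
  · rintro ⟨k, rfl⟩
    exact ⟨k, fun n => wcat_replicate_true _ n⟩
  · rintro ⟨k, h⟩
    exact ⟨k, funext fun n => (h n).trans (wcat_replicate_true _ n).symm⟩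

lemma decide_forall_eq {j k : ℕ} (h : ∀ m, (decide (m < j) : Bool) = decide (m < 2 * k)) :
    j = 2 * k := by
  have h1 := h j
  have h2 := h (2 * k)
  simp at h1 h2
  omega

lemma wpow_length (v : List Bool) (n : ℕ) : (wpow v n).length = n * v.length := by
  induction n with
  | zero => simp [wpow]
  | succ m ih =>
    simp only [wpow, List.replicate_succ, List.flatten_cons, List.length_append]
    simp only [wpow] at ih
    rw [ih]; ring

lemma wpow_mem {v : List Bool} {n : ℕ} {b : Bool} (h : b ∈ wpow v n) : b ∈ v := by
  simp only [wpow, List.mem_flatten] at h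
  obtain ⟨l, hl, hb⟩ := h
  rw [List.eq_of_mem_replicate hl] at hb
  exact hb

lemma wpow_singleton (n : ℕ) : wpow [true] n = List.replicate n true := by
  induction n with
  | zero => rfl
  | succ m ih =>
    show (List.replicate (m + 1) [true]).flatten = _
    rw [List.replicate_succ, List.flatten_cons,
      show (List.replicate m [true]).flatten = List.replicate m true from ih]
    rfl

/-- Key characterization: appending a nonempty all-false block. -/
lemma wcat_append_false_mem (x s : List Bool) (hs : s ≠ [])
    (hsf : ∀ b ∈ s, b = false) (w : ℕ → Bool) :
    wcat (x ++ s) w ∈ Lx ↔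
      ((∃ k : ℕ, 2 * k ≤ x.length ∧
          ∀ i (h : i < x.length), x.get ⟨i, h⟩ = decide (i < 2 * k)) ∧
        ∀ n, w n = false) := by
  have hslen : 0 < s.length := List.length_pos_iff.mpr hs
  rw [mem_Lx_iff]
  constructor
  · rintro ⟨k, hk⟩
    have hxk : 2 * k ≤ x.length := by
      have h0 := hk x.length
      have hlt : x.length < (x ++ s).length := by simp; omega
      rw [wcat_lt _ _ hlt] at h0
      have hmem : (x ++ s).get ⟨x.length, hlt⟩ ∈ s := by
        have : (x ++ s).get ⟨x.length, hlt⟩ = s.get ⟨0, hslen⟩ := by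
          rw [List.get_eq_getElem, List.get_eq_getElem,
            List.getElem_append_right (le_refl x.length)]
          simp
        rw [this]
        exact List.get_mem _ _
      have := hsf _ hmem
      rw [this] at h0
      have := of_decide_eq_false h0.symm
      omega
    refine ⟨⟨k, hxk, fun i h => ?_⟩, fun n => ?_⟩
    · have h0 := hk i
      have hlt : i < (x ++ s).length := by simp; omega
      rw [wcat_lt _ _ hlt] at h0
      rw [← h0]
      rw [List.get_eq_getElem, List.get_eq_getElem, List.getElem_append_left h]
    · have h0 := hk (n + x.length + s.length)
      have hge : (x ++ s).length ≤ n + x.length + s.length := by simp only [List.length_append]; omega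
      rw [wcat_ge _ _ hge] at h0
      simp only [List.length_append] at h0
      have heq : n + x.length + s.length - (x.length + s.length) = n := by omega
      rw [heq] at h0
      rw [h0]
      simp only [decide_eq_false_iff_not]
      omega
  · rintro ⟨⟨k, hxk, hx⟩, hw⟩
    refine ⟨k, fun m => ?_⟩
    by_cases h1 : m < x.length
    · have hlt : m < (x ++ s).length := by simp; omega
      rw [wcat_lt _ _ hlt, List.get_eq_getElem, List.getElem_append_left h1]
      exact hx m h1
    · by_cases h2 : m < (x ++ s).length
      · rw [wcat_lt _ _ h2]
        have hmem : (x ++ s).get ⟨m, h2⟩ ∈ s := by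
          rw [List.get_eq_getElem, List.getElem_append_right (Nat.not_lt.mp h1)]
          exact List.getElem_mem _
        rw [hsf _ hmem]
        symm
        simp only [decide_eq_false_iff_not]
        omega
      · rw [wcat_ge _ _ (Nat.not_lt.mp h2), hw]
        simp only [List.length_append] at h2
        symm
        simp only [decide_eq_false_iff_not]
        omega

lemma Lx_respective : Respective Lx := by
  refine ⟨0, fun n hn x u hu hmem w => ?_⟩
  -- first: every letter of u is false
  have hulen : 0 < u.length := List.length_pos_iff.mpr hu
  rw [mem_Lx_iff] at hmem
  obtain ⟨k, hk⟩ := hmem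
  have hfalse : ∀ b ∈ u, b = false := by
    intro b hb
    obtain ⟨i, hi, rfl⟩ := List.mem_iff_get.mp hb
    set m := x.length + i.1 + u.length * (2 * k) with hm
    have hge : x.length ≤ m := by omega
    have h0 := hk m
    rw [wcat_ge _ _ hge] at h0
    have hmod : (m - x.length) % u.length = i.1 := by
      have : m - x.length = i.1 + u.length * (2 * k) := by omega
      rw [this, Nat.add_mul_mod_self_left, Nat.mod_eq_of_lt i.2]
    have hbig : ¬ (m < 2 * k) := by
      have : 2 * k ≤ u.length * (2 * k) := Nat.le_mul_of_pos_left _ hulen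
      omega
    rw [decide_eq_false hbig] at h0
    unfold wrep at h0
    rw [hmod] at h0
    rwa [List.getD_eq_getElem _ _ i.2] at h0
  -- both powers are nonempty all-false lists
  have hpow : ∀ m : ℕ, 0 < m → (wpow u m ≠ [] ∧ ∀ b ∈ wpow u m, b = false) := by
    intro m hm
    constructor
    · intro hcon
      have hl := wpow_length u m
      rw [hcon] at hl
      exact (Nat.mul_pos hm hulen).ne' (by simpa using hl.symm)
    · intro b hb
      exact hfalse b (wpow_mem hb)
  obtain ⟨hs1, hs2⟩ := hpow n hn
  obtain ⟨ht1, ht2⟩ := hpow (n + 1) (by omega)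
  rw [wcat_append_false_mem x _ hs1 hs2 w, wcat_append_false_mem x _ ht1 ht2 w]

lemma Lx_not_nonCounting : ¬ NonCounting Lx := by
  rintro ⟨n₀, h⟩
  set n := 2 * n₀ + 2 with hn
  have hgt : n > n₀ := by omega
  have h0 := h n hgt [] [true] (fun _ => false)
  simp only [List.nil_append] at h0
  have key : ∀ m : ℕ, (wcat (wpow [true] m) (fun _ => false) ∈ Lx ↔ ∃ k, m = 2 * k) := by
    intro m
    rw [wpow_singleton, mem_Lx_iff]
    constructor
    · rintro ⟨k, hk⟩
      refine ⟨k, decide_forall_eq fun j => ?_⟩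
      have := hk j
      rwa [wcat_replicate_true] at this
    · rintro ⟨k, rfl⟩
      exact ⟨k, fun j => wcat_replicate_true _ j⟩
  rw [key n, key (n + 1)] at h0
  have h1 : ∃ k, n = 2 * k := ⟨n₀ + 1, by omega⟩
  obtain ⟨k, hk⟩ := h0.mp h1
  omega

/-- `(aa)*b^ω` is respective of its right congruence but not non-counting. -/
theorem aa_bw_respective_not_nonCounting :
    let L : Set (ℕ → Bool) :=
      { w | ∃ k : ℕ, w = wcat (List.replicate (2 * k) true) (fun _ => false) }
    Respective L ∧ ¬ NonCounting L := by
  intro L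
  exact ⟨Lx_respective, Lx_not_nonCounting⟩

end OmegaRC
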